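/- arXiv:1904.01370 — 3 statements merged into one kernel-verified Lean document; each statement's English description precedes it below -/
import Mathlib

section
/- Let X_α, α ∈ ℕ, be a countable family of proper linear subspaces of ℝ^n (X_α ≠ ℝ^n for every α). Then there exists a full-rank lattice L ⊂ ℝ^n (i.e., L = A(ℤ^n) for some invertible linear map A : ℝ^n → ℝ^n) such that L ∩ X_α = {0} for all α ∈ ℕ. -/
open Polynomial Matrix

private lemma pow_mul_nat_inj {N i i' j j' : ℕ} (hiN : i < N) (hi'N : i' < N)
    (hi : 0 < i) (hi' : 0 < i') (h : N ^ j * i = N ^ j' * i') : j = j' ∧ i = i' := by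
  have hN : 0 < N := lt_of_le_of_lt (Nat.zero_le _) hiN
  have key : ∀ {a a' b b' : ℕ}, a < N → 0 < a' → b < b' → N ^ b * a = N ^ b' * a' → False := by
    intro a a' b b' haN ha' hb hEq
    have h1 : N ^ b' = N ^ b * N ^ (b' - b) := by rw [← pow_add]; congr 1; omega
    rw [h1, mul_assoc] at hEq
    have h2 : a = N ^ (b' - b) * a' := Nat.eq_of_mul_eq_mul_left (pow_pos hN b) hEq
    have h3 : N ≤ N ^ (b' - b) := by
      calc N = N ^ 1 := (pow_one N).symm
        _ ≤ N ^ (b' - b) := Nat.pow_le_pow_right hN (by omega)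
    have : N ≤ a := by
      calc N ≤ N ^ (b' - b) := h3
        _ ≤ N ^ (b' - b) * a' := Nat.le_mul_of_pos_right _ ha'
        _ = a := h2.symm
    omega
  rcases lt_trichotomy j j' with hj | hj | hj
  · exact absurd h (fun h => key hiN hi' hj h)
  · subst hj
    exact ⟨rfl, Nat.eq_of_mul_eq_mul_left (pow_pos hN j) h⟩
  · exact absurd h.symm (fun h => key hi'N hi hj h)

private lemma dual_apply_sum {n : ℕ} (f : Module.Dual ℝ (Fin n → ℝ)) (v : Fin n → ℝ) :
    f v = ∑ i, v i * f (Pi.single i 1) := by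
  conv_lhs => rw [← Finset.univ_sum_single v]
  rw [map_sum]
  refine Finset.sum_congr rfl fun i _ => ?_
  have : Pi.single i (v i) = v i • (Pi.single i 1 : Fin n → ℝ) := by
    funext k
    by_cases hk : k = i <;> simp [Pi.single_apply, hk]
  rw [this, f.map_smul, smul_eq_mul]

/-- **Existence of a lattice avoiding countably many proper subspaces.**
Given a countable family `X_α`, `α ∈ ℕ`, of proper linear subspaces of `ℝⁿ`, there is a
full-rank lattice `L = A(ℤⁿ)` (with `A` an invertible linear map) such that
`L ∩ X_α = {0}` for every `α`. -/
theorem exists_lattice_avoiding_proper_subspaces {n : ℕ}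
    (X : ℕ → Submodule ℝ (Fin n → ℝ)) (hX : ∀ α : ℕ, X α ≠ ⊤) :
    ∃ A : (Fin n → ℝ) ≃ₗ[ℝ] (Fin n → ℝ),
      ∀ α : ℕ,
        ((A : (Fin n → ℝ) → (Fin n → ℝ)) '' {x | ∀ i, ∃ m : ℤ, x i = (m : ℝ)}) ∩
          (X α : Set (Fin n → ℝ)) = {0} := by
  classical
  set N : ℕ := n + 2 with hN
  -- exponents
  set e : Fin n → Fin n → ℕ := fun i j => N ^ ((j : ℕ) + 1) * ((i : ℕ) + 1) with he
  have einj : ∀ {i i' j j' : Fin n}, e i j = e i' j' → i = i' ∧ j = j' := by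
    intro i i' j j' h
    have h1 : (i : ℕ) + 1 < N := by have := i.isLt; omega
    have h2 : (i' : ℕ) + 1 < N := by have := i'.isLt; omega
    obtain ⟨hj, hi⟩ := pow_mul_nat_inj h1 h2 (Nat.succ_pos _) (Nat.succ_pos _) h
    exact ⟨Fin.ext (by omega), Fin.ext (by omega)⟩
  -- dual functionals
  have hdual : ∀ α, ∃ f : Module.Dual ℝ (Fin n → ℝ), f ≠ 0 ∧ (X α).map f = ⊥ :=
    fun α => (X α).exists_dual_map_eq_bot_of_lt_top ((hX α).lt_top) inferInstance
  choose f hf0 hfmap using hdual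
  have hfX : ∀ α, ∀ v ∈ X α, f α v = 0 := by
    intro α v hv
    have : f α v ∈ (X α).map (f α) := Submodule.mem_map_of_mem hv
    rw [hfmap α] at this
    simpa using this
  set c : ℕ → Fin n → ℝ := fun α i => f α (Pi.single i 1) with hc
  have hcex : ∀ α, ∃ i, c α i ≠ 0 := by
    intro α
    by_contra hall
    push_neg at hall
    apply hf0 α
    have hall' : ∀ i, f α (Pi.single i 1) = 0 := hall
    refine LinearMap.ext fun v => ?_
    rw [dual_apply_sum]
    simp [hall']
  -- the polynomials
  set p : ℕ → (Fin n → ℤ) → Polynomial ℝ :=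
    fun α m => ∑ i, ∑ j, C (c α i * (m j : ℝ)) * Polynomial.X ^ (e i j) with hp
  have hpcoeff : ∀ α (m : Fin n → ℤ) (i₀ j₀ : Fin n),
      (p α m).coeff (e i₀ j₀) = c α i₀ * (m j₀ : ℝ) := by
    intro α m i₀ j₀
    simp only [hp, Polynomial.finset_sum_coeff, Polynomial.coeff_C_mul, Polynomial.coeff_X_pow]
    rw [Finset.sum_eq_single i₀]
    · rw [Finset.sum_eq_single j₀]
      · simp
      · intro j _ hj
        rw [if_neg fun h => hj (einj h.symm).2, mul_zero]
      · intro h; exact absurd (Finset.mem_univ _) h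
    · intro i _ hi
      apply Finset.sum_eq_zero
      intro j _
      rw [if_neg fun h => hi (einj h.symm).1, mul_zero]
    · intro h; exact absurd (Finset.mem_univ _) h
  have hpne : ∀ α (m : Fin n → ℤ), m ≠ 0 → p α m ≠ 0 := by
    intro α m hm hp0
    obtain ⟨i₀, hi₀⟩ := hcex α
    obtain ⟨j₀, hj₀⟩ : ∃ j, m j ≠ 0 := by
      by_contra hall; push_neg at hall; exact hm (funext hall)
    have := hpcoeff α m i₀ j₀
    rw [hp0] at this
    simp only [Polynomial.coeff_zero] at this
    exact (mul_ne_zero hi₀ (Int.cast_ne_zero.mpr hj₀)) this.symm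
  -- the bad set
  set bad : Set ℝ :=
    ⋃ (α : ℕ), ⋃ (m : {m : Fin n → ℤ // m ≠ 0}), {t : ℝ | (p α m.1).IsRoot t} with hbad
  have hbadc : bad.Countable := by
    apply Set.countable_iUnion
    intro α
    apply Set.countable_iUnion
    intro m
    exact (Polynomial.finite_setOf_isRoot (hpne α m.1 m.2)).countable
  -- pick a good t > 1
  obtain ⟨t, ht1, htbad⟩ : ∃ t : ℝ, t ∈ Set.Ioi 1 ∧ t ∉ bad := by
    by_contra hall
    push_neg at hall
    have hsub : Set.Ioi (1 : ℝ) ⊆ bad := fun x hx => hall x hx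
    have hcnt : (Set.Ioi (1 : ℝ)).Countable := hbadc.mono hsub
    have h1 : Cardinal.mk (Set.Ioi (1 : ℝ)) ≤ Cardinal.aleph0 :=
      Cardinal.mk_le_aleph0_iff.mpr (Set.countable_coe_iff.mpr hcnt)
    rw [Cardinal.mk_Ioi_real] at h1
    exact absurd h1 Cardinal.aleph0_lt_continuum.not_ge
  have ht0 : (0 : ℝ) < t := lt_trans one_pos ht1
  -- the matrix
  set x : Fin n → ℝ := fun j => t ^ (N ^ ((j : ℕ) + 1)) with hx
  have hxpos : ∀ j, 0 < x j := fun j => pow_pos ht0 _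
  have hxmono : StrictMono x := by
    intro j k hjk
    apply pow_lt_pow_right₀ ht1
    apply Nat.pow_lt_pow_right (by omega : 1 < N)
    omega
  set M : Matrix (Fin n) (Fin n) ℝ := Matrix.of fun i j => x j ^ ((i : ℕ) + 1) with hM
  have hMent : ∀ i j, M i j = t ^ (e i j) := by
    intro i j
    simp only [hM, Matrix.of_apply, hx, he, pow_mul]
  have hMdet : M.det ≠ 0 := by
    have hfac : M = (Matrix.vandermonde x)ᵀ * Matrix.diagonal x := by
      ext i j
      simp [Matrix.mul_diagonal, Matrix.transpose_apply, Matrix.vandermonde_apply, pow_succ, hM]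
    rw [hfac, Matrix.det_mul, Matrix.det_transpose, Matrix.det_vandermonde,
      Matrix.det_diagonal]
    apply mul_ne_zero
    · apply Finset.prod_ne_zero_iff.mpr
      intro i _
      apply Finset.prod_ne_zero_iff.mpr
      intro j hj
      rw [Finset.mem_Ioi] at hj
      exact sub_ne_zero_of_ne (hxmono hj).ne'
    · exact Finset.prod_ne_zero_iff.mpr fun j _ => (hxpos j).ne'
  have hMinv : Invertible M := M.invertibleOfIsUnitDet (isUnit_iff_ne_zero.mpr hMdet)
  refine ⟨M.toLinearEquiv' hMinv, fun α => ?_⟩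
  have hA : ∀ v : Fin n → ℝ, (M.toLinearEquiv' hMinv) v = M.mulVec v := by
    intro v
    rfl
  apply Set.eq_singleton_iff_unique_mem.mpr
  constructor
  · refine ⟨⟨0, fun i => ⟨0, by simp⟩, ?_⟩, (X α).zero_mem⟩
    simp
  · rintro y ⟨⟨v, hv, rfl⟩, hyX⟩
    choose m hm using hv
    have hvm : v = fun j => (m j : ℝ) := funext hm
    by_cases hm0 : m = 0
    · subst hm0
      have : v = 0 := by rw [hvm]; funext j; simp
      rw [this]
      simp
    · exfalso
      apply htbad
      rw [hbad]
      refine Set.mem_iUnion.mpr ⟨α, Set.mem_iUnion.mpr ⟨⟨m, hm0⟩, ?_⟩⟩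
      show (p α m).IsRoot t
      have heval : (p α m).eval t = f α (M.mulVec v) := by
        rw [dual_apply_sum]
        simp only [hp, Polynomial.eval_finset_sum, Polynomial.eval_mul, Polynomial.eval_pow,
          Polynomial.eval_C, Polynomial.eval_X]
        refine Finset.sum_congr rfl fun i _ => ?_
        rw [Matrix.mulVec, dotProduct, Finset.sum_mul]
        refine Finset.sum_congr rfl fun j _ => ?_
        rw [hMent i j, hm j]
        ring
      have hzero : f α (M.mulVec v) = 0 := by
        apply hfX α
        rw [← hA v]
        exact hyX
      rw [Polynomial.IsRoot, heval, hzero]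
end

section
/- Let φ : ℝ → ℝ^n be continuous and let F ⊂ ℝ be the set of points u₀ such that φ is not affine on any neighborhood of u₀. Then there exists a full-rank lattice L ⊂ ℝ^n with dual lattice L' = {ξ ∈ ℝ^n : ξ·x ∈ ℤ for all x ∈ L} such that for every ξ ∈ L', ξ ≠ 0, and every nonempty open interval (a,b) with (a,b) ∩ F ≠ ∅, the scalar function u ↦ ξ·φ(u) is not affine on (a,b). -/
open Set Topology RealInnerProductSpace

/-- `φ` is affine on the set `I ⊆ ℝ`: `φ(u) = u • c + d` on `I` for some vectors `c, d`. -/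
def IsAffineOn {n : ℕ} (φ : ℝ → EuclideanSpace ℝ (Fin n)) (I : Set ℝ) : Prop :=
  ∃ c d : EuclideanSpace ℝ (Fin n), ∀ u ∈ I, φ u = u • c + d

/-- The set `F` of points `u₀ ∈ ℝ` such that `φ` is not affine on any neighborhood
of `u₀`. -/
def nonAffinitySet {n : ℕ} (φ : ℝ → EuclideanSpace ℝ (Fin n)) : Set ℝ :=
  {u₀ | ∀ s ∈ 𝓝 u₀, ¬ IsAffineOn φ s}

noncomputable section
variable {n : ℕ}

/-- The subspace of `ξ` such that `u ↦ ⟪ξ, φ u⟫` is affine on `(a,b)`. -/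
def affDual (φ : ℝ → EuclideanSpace ℝ (Fin n)) (a b : ℝ) :
    Submodule ℝ (EuclideanSpace ℝ (Fin n)) where
  carrier := {ξ | ∃ c d : ℝ, ∀ u ∈ Set.Ioo a b, ⟪ξ, φ u⟫ = c * u + d}
  add_mem' := by
    rintro ξ η ⟨c, d, h⟩ ⟨c', d', h'⟩
    exact ⟨c + c', d + d', fun u hu => by rw [inner_add_left, h u hu, h' u hu]; ring⟩
  zero_mem' := ⟨0, 0, fun u hu => by simp⟩
  smul_mem' := by
    rintro t ξ ⟨c, d, h⟩
    exact ⟨t * c, t * d, fun u hu => by rw [real_inner_smul_left, h u hu]; ring⟩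

example (φ : ℝ → EuclideanSpace ℝ (Fin n)) (a b : ℝ) :
    IsClosed ((affDual φ a b : Submodule ℝ (EuclideanSpace ℝ (Fin n))) : Set (EuclideanSpace ℝ (Fin n))) :=
  Submodule.closed_of_finiteDimensional _

lemma affDual_ne_top {φ : ℝ → EuclideanSpace ℝ (Fin n)} {a b : ℝ} {u₀ : ℝ}
    (hu : u₀ ∈ Set.Ioo a b ∩ nonAffinitySet φ) : affDual φ a b ≠ ⊤ := by
  intro htop
  refine hu.2 (Set.Ioo a b) (isOpen_Ioo.mem_nhds hu.1) ?_
  have h : ∀ i : Fin n, ∃ c d : ℝ, ∀ u ∈ Set.Ioo a b,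
      ⟪(EuclideanSpace.single i (1:ℝ)), φ u⟫ = c * u + d := by
    intro i
    have : (EuclideanSpace.single i (1:ℝ)) ∈ affDual φ a b := htop ▸ Submodule.mem_top
    exact this
  choose c d hcd using h
  refine ⟨(WithLp.toLp 2 (fun i => c i) : EuclideanSpace ℝ (Fin n)), (WithLp.toLp 2 (fun i => d i) : EuclideanSpace ℝ (Fin n)),
    fun u hu' => ?_⟩
  ext i
  have := hcd i u hu'
  rw [EuclideanSpace.inner_single_left] at this
  simp only [map_one, one_mul] at this
  simp only [PiLp.add_apply, PiLp.smul_apply, smul_eq_mul, PiLp.toLp_apply]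
  rw [this]; ring


/-- **Choice of a good lattice.** For a continuous flux `φ : ℝ → ℝⁿ` there is a full-rank
lattice `L = A(ℤⁿ)` such that for every nonzero `ξ` in the dual lattice
`L' = {ξ : ξ·x ∈ ℤ ∀ x ∈ L}` and every nonempty interval `(a,b)` meeting `F`, the scalar
function `u ↦ ξ · φ(u)` is not affine on `(a,b)`. -/
theorem exists_lattice_dual_nonaffine {n : ℕ}
    (φ : ℝ → EuclideanSpace ℝ (Fin n)) (hφ : Continuous φ) :
    ∃ A : EuclideanSpace ℝ (Fin n) ≃ₗ[ℝ] EuclideanSpace ℝ (Fin n),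
      ∀ ξ : EuclideanSpace ℝ (Fin n),
        (∀ x ∈ (A : EuclideanSpace ℝ (Fin n) → EuclideanSpace ℝ (Fin n)) ''
            {x | ∀ i, ∃ m : ℤ, x i = (m : ℝ)}, ∃ m : ℤ, ⟪ξ, x⟫ = (m : ℝ)) →
        ξ ≠ 0 →
        ∀ a b : ℝ, a < b → (Set.Ioo a b ∩ nonAffinitySet φ).Nonempty →
          ¬ ∃ c d : ℝ, ∀ u ∈ Set.Ioo a b, ⟪ξ, φ u⟫ = c * u + d := by
  classical
  -- the set of integer vectors is countable
  set Z : Set (EuclideanSpace ℝ (Fin n)) := {x | ∀ i, ∃ m : ℤ, x i = (m : ℝ)} with hZdef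
  have hZc : Z.Countable := by
    have hsub : Z ⊆ Set.range
        (fun m : Fin n → ℤ => (WithLp.toLp 2 (fun i => (m i : ℝ)) : EuclideanSpace ℝ (Fin n))) := by
      intro x hx
      choose m hm using hx
      exact ⟨m, by ext i; simp [hm i]⟩
    exact (Set.countable_range _).mono hsub
  -- countable index set of "bad" conditions
  set S : Set ((ℚ × ℚ) × EuclideanSpace ℝ (Fin n)) :=
    {p | (Set.Ioo (p.1.1 : ℝ) (p.1.2 : ℝ) ∩ nonAffinitySet φ).Nonempty ∧ p.2 ≠ 0 ∧ p.2 ∈ Z}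
    with hSdef
  have hSc : S.Countable := by
    refine ((Set.countable_univ (α := ℚ × ℚ)).prod hZc).mono ?_
    intro p hp
    exact ⟨Set.mem_univ _, hp.2.2⟩
  haveI : Countable ↥S := hSc.to_subtype
  -- the bad subspaces of linear maps
  let W : ↥S → Submodule ℝ (EuclideanSpace ℝ (Fin n) →L[ℝ] EuclideanSpace ℝ (Fin n)) := fun p =>
    (affDual φ (p.1.1.1 : ℝ) (p.1.1.2 : ℝ)).comap
      ((ContinuousLinearMap.apply ℝ (EuclideanSpace ℝ (Fin n)) p.1.2).toLinearMap)
  have hWclosed : ∀ p : ↥S, IsClosed (W p : Set (EuclideanSpace ℝ (Fin n) →L[ℝ] EuclideanSpace ℝ (Fin n))) := by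
    intro p
    have hWset : (W p : Set _) =
        (fun B : EuclideanSpace ℝ (Fin n) →L[ℝ] EuclideanSpace ℝ (Fin n) => B p.1.2) ⁻¹'
          (affDual φ (p.1.1.1 : ℝ) (p.1.1.2 : ℝ)) := rfl
    rw [hWset]
    exact (Submodule.closed_of_finiteDimensional _).preimage
      (ContinuousLinearMap.apply ℝ (EuclideanSpace ℝ (Fin n)) p.1.2).continuous
  have hWne : ∀ p : ↥S, W p ≠ ⊤ := by
    rintro ⟨⟨⟨q, r⟩, ψ⟩, hp⟩ htop
    obtain ⟨hF, hψ0, hψZ⟩ := hp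
    obtain ⟨u₀, hu₀⟩ := hF
    have hV : affDual φ (q : ℝ) (r : ℝ) ≠ ⊤ := affDual_ne_top hu₀
    obtain ⟨v, hv⟩ : ∃ v, v ∉ affDual φ (q : ℝ) (r : ℝ) := by
      by_contra h
      push_neg at h
      exact hV (Submodule.eq_top_iff'.mpr h)
    have hB₀ : ((innerSL ℝ ψ).smulRight v) ∈
        W ⟨((q, r), ψ), ⟨⟨u₀, hu₀⟩, hψ0, hψZ⟩⟩ := htop ▸ Submodule.mem_top
    have hmem : (⟪ψ, ψ⟫ : ℝ) • v ∈ affDual φ (q : ℝ) (r : ℝ) := hB₀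
    have hne : (⟪ψ, ψ⟫ : ℝ) ≠ 0 := inner_self_ne_zero.mpr hψ0
    have : v ∈ affDual φ (q : ℝ) (r : ℝ) := by
      have := (affDual φ (q : ℝ) (r : ℝ)).smul_mem (⟪ψ, ψ⟫ : ℝ)⁻¹ hmem
      rwa [smul_smul, inv_mul_cancel₀ hne, one_smul] at this
    exact hv this
  -- Baire category: a unit avoiding all bad subspaces
  have hdense : Dense (⋂ p : ↥S, ((W p : Set (EuclideanSpace ℝ (Fin n) →L[ℝ] EuclideanSpace ℝ (Fin n)))ᶜ)) := by
    refine dense_iInter_of_isOpen (fun p => (hWclosed p).isOpen_compl) (fun p => ?_)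
    rw [← interior_eq_empty_iff_dense_compl]
    by_contra h
    exact hWne p (Submodule.eq_top_of_nonempty_interior' _ (Set.nonempty_iff_ne_empty.mpr h))
  obtain ⟨B, hBavoid, hBunit⟩ := hdense.exists_mem_open Units.isOpen ⟨1, isUnit_one⟩
  rw [Set.mem_setOf_eq] at hBunit
  -- build the equivalence A = adjoint of B⁻¹
  let C : EuclideanSpace ℝ (Fin n) →L[ℝ] EuclideanSpace ℝ (Fin n) := ↑hBunit.unit⁻¹
  have hBCmul : B * C = 1 := by
    have h := hBunit.unit.mul_inv
    rwa [hBunit.unit_spec] at h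
  have hCBmul : C * B = 1 := by
    have h := hBunit.unit.inv_mul
    rwa [hBunit.unit_spec] at h
  have hBC : B ∘L C = ContinuousLinearMap.id ℝ _ := by
    rw [← ContinuousLinearMap.mul_def, hBCmul, ContinuousLinearMap.one_def]
  have hCB : C ∘L B = ContinuousLinearMap.id ℝ _ := by
    rw [← ContinuousLinearMap.mul_def, hCBmul, ContinuousLinearMap.one_def]
  have hadj1 : (ContinuousLinearMap.adjoint C) ∘L (ContinuousLinearMap.adjoint B) =
      ContinuousLinearMap.id ℝ _ := by
    rw [← ContinuousLinearMap.adjoint_comp, hBC, ContinuousLinearMap.adjoint_id]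
  have hadj2 : (ContinuousLinearMap.adjoint B) ∘L (ContinuousLinearMap.adjoint C) =
      ContinuousLinearMap.id ℝ _ := by
    rw [← ContinuousLinearMap.adjoint_comp, hCB, ContinuousLinearMap.adjoint_id]
  let A : EuclideanSpace ℝ (Fin n) ≃ₗ[ℝ] EuclideanSpace ℝ (Fin n) :=
    LinearEquiv.ofLinear (ContinuousLinearMap.adjoint C).toLinearMap
      (ContinuousLinearMap.adjoint B).toLinearMap
      (by apply LinearMap.ext; intro x; exact DFunLike.congr_fun hadj1 x)
      (by apply LinearMap.ext; intro x; exact DFunLike.congr_fun hadj2 x)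
  have hAapply : ∀ x, (A : EuclideanSpace ℝ (Fin n) → EuclideanSpace ℝ (Fin n)) x =
      ContinuousLinearMap.adjoint C x := fun x => rfl
  refine ⟨A, ?_⟩
  intro ξ hdual hξ a b hab hne ⟨c, d, hcd⟩
  -- the dual vector: ξ = B ψ with ψ = C ξ an integer vector
  set ψ : EuclideanSpace ℝ (Fin n) := C ξ with hψdef
  have hBψ : B ψ = ξ := DFunLike.congr_fun hBC ξ
  have hψZ : ψ ∈ Z := by
    intro i
    have hsZ : (EuclideanSpace.single i (1 : ℝ)) ∈ Z := by
      intro j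
      refine ⟨if j = i then 1 else 0, ?_⟩
      rw [EuclideanSpace.single_apply]
      split_ifs <;> simp
    obtain ⟨m, hm⟩ := hdual _ ⟨EuclideanSpace.single i (1 : ℝ), hsZ, rfl⟩
    refine ⟨m, ?_⟩
    rw [hAapply] at hm
    have h1 : ⟪ξ, ContinuousLinearMap.adjoint C (EuclideanSpace.single i (1 : ℝ))⟫
        = ⟪(EuclideanSpace.single i (1 : ℝ)), C ξ⟫ := by
      rw [real_inner_comm, ContinuousLinearMap.adjoint_inner_left]
    have h2 : (⟪(EuclideanSpace.single i (1 : ℝ)), C ξ⟫ : ℝ) = ψ i := by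
      rw [EuclideanSpace.inner_single_left]
      simp [hψdef]
    rw [h1, h2] at hm
    exact hm
  have hψ0 : ψ ≠ 0 := by
    intro h
    apply hξ
    rw [← hBψ, h, map_zero]
  -- find a rational subinterval meeting F
  obtain ⟨u₀, hu₀ab, hu₀F⟩ := hne
  obtain ⟨q, haq, hqu⟩ := exists_rat_btwn hu₀ab.1
  obtain ⟨r, hur, hrb⟩ := exists_rat_btwn hu₀ab.2
  have hpS : (((q, r), ψ) : (ℚ × ℚ) × EuclideanSpace ℝ (Fin n)) ∈ S :=
    ⟨⟨u₀, ⟨hqu, hur⟩, hu₀F⟩, hψ0, hψZ⟩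
  have hBW : B ∉ W ⟨((q, r), ψ), hpS⟩ := Set.mem_iInter.mp hBavoid ⟨((q, r), ψ), hpS⟩
  apply hBW
  show B ψ ∈ affDual φ (q : ℝ) (r : ℝ)
  rw [hBψ]
  exact ⟨c, d, fun v hv => hcd v (Set.Ioo_subset_Ioo haq.le hrb.le hv)⟩
end
end

section
/- Let φ : ℝ → ℝ^n be continuous and suppose there exist b > 0 and c, d ∈ ℝ^n such that φ(u) = u·c + d for all u ∈ [0,b]. Let u₀ ∈ L^∞(ℝ^n) with 0 ≤ u₀(x) ≤ b a.e. Then the traveling wave u(t,x) = u₀(x − tc) is an entropy solution of u_t + div_x φ(u) = 0 with initial data u₀: for every k ∈ ℝ and every nonnegative C¹ function f with compact support in (0,∞)×ℝ^n, ∫∫ [ |u(t,x)−k| ∂_t f + sign(u(t,x)−k)(φ(u(t,x))−φ(k))·∇_x f ] dt dx ≥ 0, and u(t,·) → u₀ in L¹_loc(ℝ^n) as t → 0+. Moreover ‖u(t,·)‖_X = ‖u₀‖_X for all t ≥ 0, so if u₀ ≠ 0 in L¹_loc then ‖u(t,·)‖_X does not tend to 0 as t → +∞. -/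
open MeasureTheory Filter Set Topology

/-- The norm `‖v‖_X = sup_{y ∈ ℝⁿ} ∫_{|x-y|<1} |v(x)| dx` on `L^∞(ℝⁿ)`. -/
noncomputable def normX {n : ℕ} (v : EuclideanSpace ℝ (Fin n) → ℝ) : ℝ :=
  ⨆ y : EuclideanSpace ℝ (Fin n), ∫ x in Metric.ball y 1, |v x|

section Aux

lemma TW.integral_deriv_eq_zero' (g : ℝ → ℝ) (hg : ContDiff ℝ 1 g) (h : HasCompactSupport g) :
    ∫ t : ℝ, deriv g t = 0 := by
  have hi : Integrable (deriv g) :=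
    ((hg.continuous_deriv le_rfl).integrable_of_hasCompactSupport h.deriv)
  rw [← setIntegral_univ, ← Set.Iic_union_Ioi (a := (0:ℝ)),
    setIntegral_union (Set.Iic_disjoint_Ioi le_rfl) measurableSet_Ioi hi.integrableOn
      hi.integrableOn,
    h.integral_Iic_deriv_eq hg, h.integral_Ioi_deriv_eq hg]
  ring

lemma TW.integral_fderiv_apply_eq_zero
    {E : Type*} [NormedAddCommGroup E] [NormedSpace ℝ E] [MeasurableSpace E] [BorelSpace E]
    [FiniteDimensional ℝ E] {μ : Measure E} [μ.IsAddHaarMeasure]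
    (f : E → ℝ) (hf : ContDiff ℝ 1 f) (h : HasCompactSupport f) (v : E) :
    ∫ x, fderiv ℝ f x v ∂μ = 0 := by
  have h1 : Integrable (fun x => fderiv ℝ (fun _ => (1:ℝ)) x v * f x) μ := by
    simp [fderiv_fun_const]
  have hcd : Continuous fun x => fderiv ℝ f x v :=
    (hf.continuous_fderiv one_ne_zero).clm_apply continuous_const
  have h2 : Integrable (fun x => (1:ℝ) * fderiv ℝ f x v) μ := by
    simpa using hcd.integrable_of_hasCompactSupport
      (h.fderiv ℝ |>.comp_left (g := fun L : E →L[ℝ] ℝ => L v) rfl)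
  have h3 : Integrable (fun x => (1:ℝ) * f x) μ := by
    simpa using hf.continuous.integrable_of_hasCompactSupport h
  have := integral_mul_fderiv_eq_neg_fderiv_mul_of_integrable h1 h2 h3
    (fun x _ => differentiable_const (1:ℝ) x) (fun x _ => hf.differentiable one_ne_zero x)
  simpa [fderiv_fun_const] using this

variable {n : ℕ}
local notation "E" => EuclideanSpace ℝ (Fin n)

noncomputable def TW.shear (c : E) : (ℝ × E) ≃ₜ (ℝ × E) where
  toFun := fun p => (p.1, p.2 + p.1 • c)
  invFun := fun p => (p.1, p.2 - p.1 • c)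
  left_inv := fun p => by simp
  right_inv := fun p => by simp
  continuous_toFun := by fun_prop
  continuous_invFun := by fun_prop

lemma TW.shear_measurePreserving (c : E) :
    MeasurePreserving (TW.shear c) volume volume := by
  rw [MeasureTheory.Measure.volume_eq_prod]
  exact (MeasurePreserving.id volume).skew_product
    (g := fun t (x : E) => x + t • c) (by fun_prop)
    (Filter.Eventually.of_forall fun t => (measurePreserving_add_right volume (t • c)).map_eq)

lemma TW.qmp_snd :
    Measure.QuasiMeasurePreserving (Prod.snd : ℝ × E → E)
      (volume : Measure (ℝ × E)) volume := by
  rw [Measure.volume_eq_prod]; exact Measure.quasiMeasurePreserving_snd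

lemma TW.ae_shear (c : E) {P : E → Prop} (h : ∀ᵐ y : E, P y) :
    ∀ᵐ p : ℝ × E, P (p.2 - p.1 • c) := by
  have hSsymm : MeasurePreserving ((TW.shear c).symm : ℝ × E → ℝ × E) volume volume :=
    (TW.shear_measurePreserving c).symm (TW.shear c).toMeasurableEquiv
  have h1 : ∀ᵐ p : ℝ × E, P p.2 := TW.qmp_snd.ae h
  have := hSsymm.quasiMeasurePreserving.ae h1
  simpa [TW.shear] using this

lemma TW.key_integral (c : E) (k M : ℝ) (u₀ : E → ℝ)
    (hmeas : AEStronglyMeasurable u₀ volume)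
    (hbd : ∀ᵐ y : E, |u₀ y - k| ≤ M)
    (f : ℝ × E → ℝ) (hf : ContDiff ℝ 1 f) (hsupp : HasCompactSupport f) :
    Integrable (fun p : ℝ × E => |u₀ (p.2 - p.1 • c) - k| * fderiv ℝ f p ((1:ℝ), c)) volume ∧
    (∫ p : ℝ × E, |u₀ (p.2 - p.1 • c) - k| * fderiv ℝ f p ((1:ℝ), c)) = 0 := by
  set S := TW.shear (n := n) c with hS
  have hSmp : MeasurePreserving (S : ℝ × E → ℝ × E) volume volume :=
    TW.shear_measurePreserving c
  have hSsymm : MeasurePreserving (S.symm : ℝ × E → ℝ × E) volume volume :=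
    (TW.shear_measurePreserving c).symm S.toMeasurableEquiv
  set F : E → ℝ := fun y => |u₀ y - k| with hF
  have hFm : AEStronglyMeasurable F volume :=
    ((hmeas.sub (aestronglyMeasurable_const (b := k))).norm.congr
      (Filter.Eventually.of_forall fun x => by simp [F, Real.norm_eq_abs]))
  have hFsnd : AEStronglyMeasurable (fun p : ℝ × E => F p.2) volume :=
    hFm.comp_quasiMeasurePreserving TW.qmp_snd
  have hAm : AEStronglyMeasurable (fun p : ℝ × E => F (p.2 - p.1 • c)) volume := by
    have := hFsnd.comp_quasiMeasurePreserving hSsymm.quasiMeasurePreserving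
    simpa [S, TW.shear, Function.comp_def] using this
  have hDcont : Continuous (fun p : ℝ × E => fderiv ℝ f p ((1:ℝ), c)) :=
    (hf.continuous_fderiv one_ne_zero).clm_apply continuous_const
  have hDcs : HasCompactSupport (fun p : ℝ × E => fderiv ℝ f p ((1:ℝ), c)) :=
    (hsupp.fderiv ℝ).comp_left (g := fun L : (ℝ × E) →L[ℝ] ℝ => L ((1:ℝ), c)) rfl
  have hDint : Integrable (fun p : ℝ × E => fderiv ℝ f p ((1:ℝ), c)) volume :=
    hDcont.integrable_of_hasCompactSupport hDcs
  have hbd' : ∀ᵐ p : ℝ × E, F (p.2 - p.1 • c) ≤ M := TW.ae_shear c hbd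
  set A : ℝ × E → ℝ := fun p => F (p.2 - p.1 • c) * fderiv ℝ f p ((1:ℝ), c) with hA
  have hAint : Integrable A volume := by
    refine Integrable.mono' ((hDint.norm).const_mul M) (hAm.mul hDcont.aestronglyMeasurable) ?_
    filter_upwards [hbd'] with p hp
    have h0 : 0 ≤ F (p.2 - p.1 • c) := abs_nonneg _
    calc ‖A p‖ = F (p.2 - p.1 • c) * ‖fderiv ℝ f p ((1:ℝ), c)‖ := by
          simp [A, abs_mul, abs_of_nonneg h0, Real.norm_eq_abs]
      _ ≤ M * ‖fderiv ℝ f p ((1:ℝ), c)‖ :=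
          mul_le_mul_of_nonneg_right hp (norm_nonneg _)
  refine ⟨hAint, ?_⟩
  have hcomp : ∫ p, A p = ∫ p : ℝ × E, A (S p) :=
    (hSmp.integral_comp S.toMeasurableEquiv.measurableEmbedding A).symm
  set G : ℝ × E → ℝ := fun p => F p.2 * fderiv ℝ f (p.1, p.2 + p.1 • c) ((1:ℝ), c) with hGdef
  have hASG : (fun p : ℝ × E => A (S p)) = G := by
    funext p; simp [A, G, S, TW.shear]
  have hGint : Integrable G ((volume : Measure ℝ).prod volume) := by
    rw [← Measure.volume_eq_prod, ← hASG]
    exact (hSmp.integrable_comp_emb S.toMeasurableEquiv.measurableEmbedding).2 hAint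
  have inner : ∀ y : E, (∫ t : ℝ, F y * fderiv ℝ f (t, y + t • c) ((1:ℝ), c)) = 0 := by
    intro y
    have hhy : ∀ t : ℝ, HasDerivAt (fun s : ℝ => f (s, y + s • c))
        (fderiv ℝ f (t, y + t • c) ((1:ℝ), c)) t := by
      intro t
      have hb : HasDerivAt (fun s : ℝ => y + s • c) c t := by
        simpa using ((hasDerivAt_id t).smul_const c).const_add y
      have h1 : HasDerivAt (fun s : ℝ => (s, y + s • c)) ((1:ℝ), c) t :=
        (hasDerivAt_id t).prodMk hb
      exact ((hf.differentiable one_ne_zero) (t, y + t • c)).hasFDerivAt.comp_hasDerivAt t h1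
    have hC1 : ContDiff ℝ 1 (fun s : ℝ => f (s, y + s • c)) := by
      apply hf.comp
      exact contDiff_id.prodMk (contDiff_const.add (contDiff_id.smul contDiff_const))
    have hcs : HasCompactSupport (fun s : ℝ => f (s, y + s • c)) := by
      apply HasCompactSupport.intro (hsupp.image continuous_fst)
      intro s hs
      by_contra hne
      exact hs ⟨(s, y + s • c), subset_tsupport f hne, rfl⟩
    have hderiv0 : (∫ t : ℝ, fderiv ℝ f (t, y + t • c) ((1:ℝ), c)) = 0 := by
      have : (fun t : ℝ => fderiv ℝ f (t, y + t • c) ((1:ℝ), c))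
          = deriv (fun s : ℝ => f (s, y + s • c)) := by
        funext t; exact ((hhy t).deriv).symm
      rw [this]
      exact TW.integral_deriv_eq_zero' _ hC1 hcs
    rw [integral_const_mul, hderiv0, mul_zero]
  rw [hcomp, hASG, Measure.volume_eq_prod, integral_prod G hGint,
    integral_integral_swap (by exact hGint)]
  simp only [G]
  simp only [inner, integral_zero]

lemma normX_shift (v : E → ℝ) (a : E) : normX (fun x => v (x - a)) = normX v := by
  unfold normX
  have key : ∀ y : E, (∫ x in Metric.ball y 1, |v (x - a)|)
      = ∫ x in Metric.ball (y - a) 1, |v x| := by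
    intro y
    have h1 : ∀ x : E, Set.indicator (Metric.ball y 1) (fun x => |v (x - a)|) x
        = Set.indicator (Metric.ball (y - a) 1) (fun z => |v z|) (x - a) := by
      intro x
      have hmem : x ∈ Metric.ball y 1 ↔ x - a ∈ Metric.ball (y - a) 1 := by
        simp [Metric.mem_ball, dist_sub_right]
      by_cases hx : x ∈ Metric.ball y 1
      · rw [Set.indicator_of_mem hx, Set.indicator_of_mem (hmem.1 hx)]
      · rw [Set.indicator_of_notMem hx, Set.indicator_of_notMem (fun h => hx (hmem.2 h))]
    rw [← integral_indicator measurableSet_ball, ← integral_indicator measurableSet_ball]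
    calc ∫ x, Set.indicator (Metric.ball y 1) (fun x => |v (x - a)|) x
        = ∫ x, Set.indicator (Metric.ball (y - a) 1) (fun z => |v z|) (x - a) := by
          simp_rw [h1]
      _ = ∫ x, Set.indicator (Metric.ball (y - a) 1) (fun z => |v z|) x :=
          integral_sub_right_eq_self _ a
  simp_rw [key]
  exact (Equiv.subRight a).surjective.iSup_comp
    (g := fun z => ∫ x in Metric.ball z 1, |v x|)

lemma normX_ae_zero (v : E → ℝ) (hm : AEStronglyMeasurable v volume) (b : ℝ)
    (hbd : ∀ᵐ x : E, |v x| ≤ b) (h0 : normX v = 0) : v =ᵐ[volume] 0 := by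
  have hint : ∀ y : E, IntegrableOn (fun x => |v x|) (Metric.ball y 1) volume := by
    intro y
    haveI : IsFiniteMeasure (volume.restrict (Metric.ball y 1)) :=
      ⟨by rw [Measure.restrict_apply_univ]; exact measure_ball_lt_top⟩
    refine Integrable.mono' (integrable_const b) ?_ ?_
    · exact (hm.restrict.norm).congr (Filter.Eventually.of_forall fun x => by
        simp [Real.norm_eq_abs])
    · filter_upwards [ae_restrict_of_ae hbd] with x hx
      simpa [abs_abs] using hx
  have hBdd : BddAbove (Set.range fun y : E => ∫ x in Metric.ball y 1, |v x|) := by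
    refine ⟨b * (volume (Metric.ball (0:E) 1)).toReal, ?_⟩
    rintro _ ⟨y, rfl⟩
    have hvol : volume (Metric.ball y 1) = volume (Metric.ball (0:E) 1) := by
      have : Metric.ball y 1 = (fun x => x + (-y)) ⁻¹' Metric.ball (0:E) 1 := by
        ext x; simp [Metric.mem_ball, dist_eq_norm, sub_eq_add_neg]
      rw [this]
      exact measure_preimage_add_right volume (-y) _
    haveI : IsFiniteMeasure (volume.restrict (Metric.ball y 1)) :=
      ⟨by rw [Measure.restrict_apply_univ]; exact measure_ball_lt_top⟩
    calc (∫ x in Metric.ball y 1, |v x|) ≤ ∫ _x in Metric.ball y 1, b := by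
          refine integral_mono_ae (hint y) (integrable_const b) ?_
          exact ae_restrict_of_ae hbd
      _ = (volume (Metric.ball y 1)).toReal * b := by
          simp [setIntegral_const, smul_eq_mul, Measure.real]
      _ = b * (volume (Metric.ball (0:E) 1)).toReal := by rw [hvol]; ring
  have hball : ∀ y : E, ∀ᵐ x : E, x ∈ Metric.ball y 1 → v x = 0 := by
    intro y
    have hle : (∫ x in Metric.ball y 1, |v x|) ≤ 0 := h0 ▸ le_ciSup hBdd y
    have hge : 0 ≤ ∫ x in Metric.ball y 1, |v x| :=
      integral_nonneg fun x => abs_nonneg _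
    have heq : (∫ x in Metric.ball y 1, |v x|) = 0 := le_antisymm hle hge
    have := (integral_eq_zero_iff_of_nonneg_ae
      (Filter.Eventually.of_forall fun x => abs_nonneg (v x)) (hint y)).1 heq
    have h2 : ∀ᵐ x ∂volume.restrict (Metric.ball y 1), v x = 0 := by
      filter_upwards [this] with x hx
      simpa [abs_eq_zero] using hx
    rwa [ae_restrict_iff' measurableSet_ball] at h2
  obtain ⟨D, hDc, hDd⟩ := TopologicalSpace.exists_countable_dense E
  have hall : ∀ᵐ x : E, ∀ q ∈ D, x ∈ Metric.ball q 1 → v x = 0 :=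
    (ae_ball_iff hDc).2 fun q _ => hball q
  filter_upwards [hall] with x hx
  obtain ⟨q, hqD, hq⟩ := hDd.exists_dist_lt x zero_lt_one
  exact hx q hqD (by simpa [Metric.mem_ball, dist_comm] using hq)

lemma middle_tendsto (g : E → ℝ) (hg : Continuous g) (hgs : HasCompactSupport g) (c : E) :
    Tendsto (fun t : ℝ => ∫ x : E, |g (x - t • c) - g x|) (𝓝[>] (0:ℝ)) (𝓝 0) := by
  obtain ⟨C, hC⟩ := hgs.exists_bound_of_continuous hg
  set L := Metric.cthickening 1 (tsupport g) with hL
  have hLc : IsCompact L := hgs.cthickening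
  have hbound_int : Integrable (L.indicator fun _ => 2 * C) volume := by
    rw [integrable_indicator_iff hLc.measurableSet]
    exact integrableOn_const hLc.measure_lt_top.ne
  have h0 : Tendsto (fun t : ℝ => t • c) (𝓝[>] (0:ℝ)) (𝓝 0) := by
    have : Tendsto (fun t : ℝ => t • c) (𝓝 (0:ℝ)) (𝓝 ((0:ℝ) • c)) :=
      (continuous_id.smul continuous_const).tendsto 0
    simpa using this.mono_left nhdsWithin_le_nhds
  have hsmall : ∀ᶠ t : ℝ in 𝓝[>] 0, ‖t • c‖ ≤ 1 := by
    filter_upwards [h0 (Metric.closedBall_mem_nhds 0 one_pos)] with t ht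
    simpa [Metric.mem_closedBall, dist_eq_norm] using ht
  have := tendsto_integral_filter_of_dominated_convergence (μ := volume) (l := 𝓝[>] (0:ℝ))
      (F := fun (t : ℝ) (x : E) => |g (x - t • c) - g x|)
      (f := fun _ : E => (0:ℝ)) (bound := L.indicator fun _ => 2 * C)
      ?_ ?_ hbound_int ?_
  · simpa using this
  · filter_upwards with t
    exact ((hg.comp (continuous_id.sub continuous_const)).sub hg).abs.aestronglyMeasurable
  · filter_upwards [hsmall] with t ht
    filter_upwards with x
    by_cases hx : x ∈ L
    · rw [Set.indicator_of_mem hx]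
      have := (norm_sub_le (g (x - t • c)) (g x)).trans (add_le_add (hC _) (hC _))
      calc ‖|g (x - t • c) - g x|‖ = ‖g (x - t • c) - g x‖ := by simp [Real.norm_eq_abs]
        _ ≤ 2 * C := by linarith
    · rw [Set.indicator_of_notMem hx]
      have hx1 : x ∉ tsupport g := fun h => hx (Metric.self_subset_cthickening _ h)
      have hx2 : x - t • c ∉ tsupport g := by
        intro h
        apply hx
        refine Metric.mem_cthickening_of_dist_le x (x - t • c) 1 _ h ?_
        simpa [dist_eq_norm] using ht
      rw [image_eq_zero_of_notMem_tsupport hx1, image_eq_zero_of_notMem_tsupport hx2]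
      simp
  · filter_upwards with x
    have hcont : Tendsto (fun t : ℝ => |g (x - t • c) - g x|) (𝓝 (0:ℝ))
        (𝓝 |g (x - (0:ℝ) • c) - g x|) := by
      exact ((hg.comp (continuous_const.sub (continuous_id.smul continuous_const))).sub
        continuous_const).abs.tendsto 0
    simpa using hcont.mono_left nhdsWithin_le_nhds

lemma l1loc_tendsto (u₀ : E → ℝ) (hmeas : AEStronglyMeasurable u₀ volume) (b : ℝ)
    (hbd : ∀ᵐ x : E, |u₀ x| ≤ b) (c : E) (K : Set E) (hK : IsCompact K) :
    Tendsto (fun t : ℝ => ∫ x in K, |u₀ (x - t • c) - u₀ x|) (𝓝[>] (0:ℝ)) (𝓝 0) := by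
  set K' := Metric.cthickening 1 K with hK'
  have hK'c : IsCompact K' := hK.cthickening
  set v : E → ℝ := K'.indicator u₀ with hv
  have hvm : AEStronglyMeasurable v volume :=
    hmeas.indicator hK'c.measurableSet
  have hvint : Integrable v volume := by
    have hbint : Integrable (K'.indicator fun _ : E => b) volume :=
      (integrable_indicator_iff hK'c.measurableSet).2
        (integrableOn_const hK'c.measure_lt_top.ne)
    refine Integrable.mono' hbint hvm ?_
    · filter_upwards [hbd] with x hx
      by_cases hxK : x ∈ K'
      · simpa [v, Set.indicator_of_mem hxK, Real.norm_eq_abs] using hx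
      · simp [v, Set.indicator_of_notMem hxK]
  rw [Metric.tendsto_nhds]
  intro ε hε
  obtain ⟨g, hgs, hgl1, hgc, hgint⟩ :=
    hvint.exists_hasCompactSupport_integral_sub_le (by positivity : (0:ℝ) < ε/4)
  have hmid := middle_tendsto g hgc hgs c
  have hmid' : ∀ᶠ t : ℝ in 𝓝[>] 0, (∫ x : E, |g (x - t • c) - g x|) < ε/4 := by
    have := hmid (Metric.ball_mem_nhds 0 (by positivity : (0:ℝ) < ε/4))
    filter_upwards [this] with t ht
    have h1 : 0 ≤ ∫ x : E, |g (x - t • c) - g x| := integral_nonneg fun x => abs_nonneg _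
    simpa [Real.dist_eq, abs_of_nonneg h1] using ht
  have h0 : Tendsto (fun t : ℝ => t • c) (𝓝[>] (0:ℝ)) (𝓝 0) := by
    have : Tendsto (fun t : ℝ => t • c) (𝓝 (0:ℝ)) (𝓝 ((0:ℝ) • c)) :=
      (continuous_id.smul continuous_const).tendsto 0
    simpa using this.mono_left nhdsWithin_le_nhds
  have hsmall : ∀ᶠ t : ℝ in 𝓝[>] 0, ‖t • c‖ ≤ 1 := by
    filter_upwards [h0 (Metric.closedBall_mem_nhds 0 one_pos)] with t ht
    simpa [Metric.mem_closedBall, dist_eq_norm] using ht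
  filter_upwards [hmid', hsmall] with t hmidt hsmallt
  -- the three-term estimate
  have hgshift : Integrable (fun x : E => g (x - t • c)) volume := hgint.comp_sub_right (t • c)
  have hvshift : Integrable (fun x : E => v (x - t • c)) volume := hvint.comp_sub_right (t • c)
  have hterm1 : Integrable (fun x : E => ‖v (x - t • c) - g (x - t • c)‖) volume :=
    ((hvint.sub hgint).norm).comp_sub_right (t • c)
  have hterm2 : Integrable (fun x : E => |g (x - t • c) - g x|) volume :=
    ((hgshift.sub hgint)).abs
  have hterm3 : Integrable (fun x : E => ‖g x - v x‖) volume := (hgint.sub hvint).norm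
  have hvv : Integrable (fun x : E => |v (x - t • c) - v x|) volume := (hvshift.sub hvint).abs
  have step0 : (∫ x in K, |u₀ (x - t • c) - u₀ x|) = ∫ x in K, |v (x - t • c) - v x| := by
    refine setIntegral_congr_fun hK.measurableSet fun x hxK => ?_
    have hx1 : x ∈ K' := Metric.self_subset_cthickening _ hxK
    have hx2 : x - t • c ∈ K' := by
      refine Metric.mem_cthickening_of_dist_le (x - t • c) x 1 _ hxK ?_
      simpa [dist_eq_norm] using hsmallt
    rw [hv]
    simp [Set.indicator_of_mem hx1, Set.indicator_of_mem hx2]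
  have step1 : (∫ x in K, |v (x - t • c) - v x|) ≤ ∫ x : E, |v (x - t • c) - v x| :=
    setIntegral_le_integral hvv (Filter.Eventually.of_forall fun x => abs_nonneg _)
  have step2 : (∫ x : E, |v (x - t • c) - v x|)
      ≤ ∫ x : E, (‖v (x - t • c) - g (x - t • c)‖ + |g (x - t • c) - g x| + ‖g x - v x‖) := by
    refine integral_mono hvv ((hterm1.add hterm2).add hterm3) fun x => ?_
    have h1 : v (x - t • c) - v x
        = (v (x - t • c) - g (x - t • c)) + ((g (x - t • c) - g x) + (g x - v x)) := by ring
    rw [h1]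
    refine (abs_add_le _ _).trans ?_
    have h2 := abs_add_le (g (x - t • c) - g x) (g x - v x)
    simp only [Real.norm_eq_abs]
    linarith
  have step2' : (∫ x : E, (‖v (x - t • c) - g (x - t • c)‖ + |g (x - t • c) - g x| + ‖g x - v x‖))
      = (∫ x : E, ‖v (x - t • c) - g (x - t • c)‖) + (∫ x : E, |g (x - t • c) - g x|)
        + ∫ x : E, ‖g x - v x‖ := by
    have h12 : Integrable
        (fun x : E => ‖v (x - t • c) - g (x - t • c)‖ + |g (x - t • c) - g x|) volume :=
      hterm1.add hterm2
    rw [integral_add h12 hterm3, integral_add hterm1 hterm2]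
  have hshift_eq : (∫ x : E, ‖v (x - t • c) - g (x - t • c)‖) = ∫ x : E, ‖v x - g x‖ :=
    integral_sub_right_eq_self (fun x => ‖v x - g x‖) (t • c)
  have hrev : (∫ x : E, ‖g x - v x‖) = ∫ x : E, ‖v x - g x‖ := by
    simp_rw [norm_sub_rev (g _)]
  have hfinal : (∫ x in K, |u₀ (x - t • c) - u₀ x|) < ε := by
    rw [step0]
    have h2 := step1.trans (step2.trans_eq step2')
    rw [hshift_eq, hrev] at h2
    linarith
  have hnn : 0 ≤ ∫ x in K, |u₀ (x - t • c) - u₀ x| := integral_nonneg fun x => abs_nonneg _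
  simpa [Real.dist_eq, abs_of_nonneg hnn] using hfinal

end Aux
/-- **Non-decaying traveling waves when the flux is affine near `0`.**
If the continuous flux `φ` satisfies `φ(v) = v • c + d` on `[0,b]` and
`0 ≤ u₀ ≤ b` a.e., then the traveling wave `u(t,x) = u₀(x − tc)` is an entropy solution
of `u_t + div_x φ(u) = 0` with initial data `u₀`: the Kruzhkov entropy inequalities hold,
`u(t,·) → u₀` in `L¹_loc` as `t → 0+`, and moreover `‖u(t,·)‖_X = ‖u₀‖_X` for all
`t ≥ 0`; consequently, if `u₀ ≠ 0` in `L¹_loc` then `‖u(t,·)‖_X` does not tend to `0`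
as `t → +∞`. -/
theorem traveling_wave_entropy_solution_no_decay {n : ℕ}
    (φ : ℝ → EuclideanSpace ℝ (Fin n)) (hφ : Continuous φ)
    (b : ℝ) (hb : 0 < b) (c d : EuclideanSpace ℝ (Fin n))
    (haff : ∀ v ∈ Set.Icc (0 : ℝ) b, φ v = v • c + d)
    (u₀ : EuclideanSpace ℝ (Fin n) → ℝ) (hu₀ : MemLp u₀ ⊤ volume)
    (hrange : ∀ᵐ x : EuclideanSpace ℝ (Fin n), u₀ x ∈ Set.Icc (0 : ℝ) b)
    (u : ℝ → EuclideanSpace ℝ (Fin n) → ℝ)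
    (hu : u = fun t x => u₀ (x - t • c)) :
    (∀ k : ℝ, ∀ f : ℝ × EuclideanSpace ℝ (Fin n) → ℝ,
      ContDiff ℝ 1 f → HasCompactSupport f →
      tsupport f ⊆ Set.Ioi (0:ℝ) ×ˢ Set.univ → (∀ p, 0 ≤ f p) →
      0 ≤ ∫ p : ℝ × EuclideanSpace ℝ (Fin n),
        (|u p.1 p.2 - k| * fderiv ℝ f p ((1:ℝ), (0 : EuclideanSpace ℝ (Fin n))) +
          Real.sign (u p.1 p.2 - k) *
            fderiv ℝ f p ((0:ℝ), φ (u p.1 p.2) - φ k))) ∧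
    (∀ K : Set (EuclideanSpace ℝ (Fin n)), IsCompact K →
      Tendsto (fun t => ∫ x in K, |u t x - u₀ x|) (𝓝[>] (0:ℝ)) (𝓝 0)) ∧
    (∀ t : ℝ, 0 ≤ t → normX (u t) = normX u₀) ∧
    (¬ (u₀ =ᵐ[volume] (fun _ => (0:ℝ))) →
      ¬ Tendsto (fun t => normX (u t)) atTop (𝓝 0)) := by
  have habs : ∀ᵐ x : EuclideanSpace ℝ (Fin n), |u₀ x| ≤ b := by
    filter_upwards [hrange] with x hx
    rw [abs_of_nonneg hx.1]; exact hx.2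
  have hmeas : AEStronglyMeasurable u₀ volume := hu₀.aestronglyMeasurable
  subst hu
  refine ⟨?_, ?_, ?_, ?_⟩
  · -- entropy inequalities
    intro k f hf hcs _hsupp _hfnn
    set w : EuclideanSpace ℝ (Fin n) :=
      if k < 0 then k • c + d - φ k else if b < k then φ k - (k • c + d) else 0 with hw
    have hsign : ∀ x : ℝ, Real.sign x * x = |x| := by
      intro x
      rcases lt_trichotomy x 0 with h | h | h
      · rw [Real.sign_of_neg h, abs_of_neg h]; ring
      · simp [h]
      · rw [Real.sign_of_pos h, abs_of_pos h]; ring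
    have hvec : ∀ a : ℝ, a ∈ Set.Icc (0:ℝ) b →
        Real.sign (a - k) • (φ a - φ k) = |a - k| • c + w := by
      intro a ha
      by_cases hk1 : k < 0
      · have hpos : 0 < a - k := by linarith [ha.1]
        rw [hw, if_pos hk1, Real.sign_of_pos hpos, abs_of_pos hpos, haff a ha]
        module
      · by_cases hk2 : b < k
        · have hneg : a - k < 0 := by linarith [ha.2]
          rw [hw, if_neg hk1, if_pos hk2, Real.sign_of_neg hneg, abs_of_neg hneg, haff a ha]
          module
        · have hkI : k ∈ Set.Icc (0:ℝ) b := ⟨le_of_not_gt hk1, le_of_not_gt hk2⟩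
          rw [hw, if_neg hk1, if_neg hk2, add_zero, haff a ha, haff k hkI]
          have h1 : a • c + d - (k • c + d) = (a - k) • c := by module
          rw [h1, smul_smul, hsign]
    have hpt : ∀ p : ℝ × EuclideanSpace ℝ (Fin n),
        u₀ (p.2 - p.1 • c) ∈ Set.Icc (0:ℝ) b →
        |u₀ (p.2 - p.1 • c) - k| * fderiv ℝ f p ((1:ℝ), (0 : EuclideanSpace ℝ (Fin n))) +
          Real.sign (u₀ (p.2 - p.1 • c) - k) *
            fderiv ℝ f p ((0:ℝ), φ (u₀ (p.2 - p.1 • c)) - φ k)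
        = |u₀ (p.2 - p.1 • c) - k| * fderiv ℝ f p ((1:ℝ), c)
          + fderiv ℝ f p ((0:ℝ), w) := by
      intro p hp
      set a := u₀ (p.2 - p.1 • c) with ha
      set L := fderiv ℝ f p with hL
      have e1 : L ((0:ℝ), Real.sign (a - k) • (φ a - φ k))
          = Real.sign (a - k) * L ((0:ℝ), φ a - φ k) := by
        rw [show ((0:ℝ), Real.sign (a - k) • (φ a - φ k))
            = Real.sign (a - k) • ((0:ℝ), φ a - φ k) from by simp [Prod.smul_mk],
          L.map_smul, smul_eq_mul]
      have e2 : L ((0:ℝ), |a - k| • c + w) = |a - k| * L ((0:ℝ), c) + L ((0:ℝ), w) := by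
        rw [show ((0:ℝ), |a - k| • c + w)
            = |a - k| • ((0:ℝ), c) + ((0:ℝ), w) from by simp [Prod.smul_mk],
          L.map_add, L.map_smul, smul_eq_mul]
      have e3 : L ((1:ℝ), c)
          = L ((1:ℝ), (0 : EuclideanSpace ℝ (Fin n))) + L ((0:ℝ), c) := by
        rw [← L.map_add]
        norm_num
      rw [← e1, hvec a hp, e2, e3]
      ring
    have haep : ∀ᵐ p : ℝ × EuclideanSpace ℝ (Fin n),
        u₀ (p.2 - p.1 • c) ∈ Set.Icc (0:ℝ) b := TW.ae_shear c hrange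
    have hbdk : ∀ᵐ y : EuclideanSpace ℝ (Fin n), |u₀ y - k| ≤ b + |k| := by
      filter_upwards [habs] with y hy
      calc |u₀ y - k| ≤ |u₀ y| + |k| := abs_sub _ _
        _ ≤ b + |k| := by linarith
    obtain ⟨hAint, hA0⟩ := TW.key_integral c k (b + |k|) u₀ hmeas hbdk f hf hcs
    have hBcont : Continuous (fun p : ℝ × EuclideanSpace ℝ (Fin n) =>
        fderiv ℝ f p ((0:ℝ), w)) :=
      (hf.continuous_fderiv one_ne_zero).clm_apply continuous_const
    have hBcs : HasCompactSupport (fun p : ℝ × EuclideanSpace ℝ (Fin n) =>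
        fderiv ℝ f p ((0:ℝ), w)) :=
      (hcs.fderiv ℝ).comp_left
        (g := fun L : (ℝ × EuclideanSpace ℝ (Fin n)) →L[ℝ] ℝ => L ((0:ℝ), w)) rfl
    have hBint : Integrable (fun p : ℝ × EuclideanSpace ℝ (Fin n) =>
        fderiv ℝ f p ((0:ℝ), w)) volume :=
      hBcont.integrable_of_hasCompactSupport hBcs
    haveI : (volume : Measure (ℝ × EuclideanSpace ℝ (Fin n))).IsAddHaarMeasure := by
      rw [MeasureTheory.Measure.volume_eq_prod]
      infer_instance
    have hB0 : (∫ p : ℝ × EuclideanSpace ℝ (Fin n), fderiv ℝ f p ((0:ℝ), w)) = 0 :=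
      TW.integral_fderiv_apply_eq_zero f hf hcs _
    have hcongr : (∫ p : ℝ × EuclideanSpace ℝ (Fin n),
        (|u₀ (p.2 - p.1 • c) - k| * fderiv ℝ f p ((1:ℝ), (0 : EuclideanSpace ℝ (Fin n))) +
          Real.sign (u₀ (p.2 - p.1 • c) - k) *
            fderiv ℝ f p ((0:ℝ), φ (u₀ (p.2 - p.1 • c)) - φ k)))
        = ∫ p : ℝ × EuclideanSpace ℝ (Fin n),
            (|u₀ (p.2 - p.1 • c) - k| * fderiv ℝ f p ((1:ℝ), c)
              + fderiv ℝ f p ((0:ℝ), w)) := by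
      refine integral_congr_ae ?_
      filter_upwards [haep] with p hp
      exact hpt p hp
    simp only
    rw [hcongr, integral_add hAint hBint, hA0, hB0]
    norm_num
  · -- L¹loc convergence
    intro K hK
    simp only
    exact l1loc_tendsto u₀ hmeas b habs c K hK
  · -- normX invariance
    intro t _ht
    exact normX_shift u₀ (t • c)
  · -- no decay
    intro hne ht
    have hconst : (fun t : ℝ => normX (fun x => u₀ (x - t • c)))
        = fun _ : ℝ => normX u₀ := by
      funext t; exact normX_shift u₀ (t • c)
    rw [hconst] at ht
    have h0 : normX u₀ = 0 := tendsto_nhds_unique tendsto_const_nhds ht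
    exact hne (normX_ae_zero u₀ hmeas b habs h0)
end
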